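/- arXiv:1706.03002 — 4 statements merged into one kernel-verified Lean document; each statement's English description precedes it below -/
import Mathlib

section
/- For any completely multiplicative function f : ℕ → ℝ with values in [-1,1] and any x ≥ 2, one has ∑_{n ≤ x} f(n)/n = (1/x) ∑_{n ≤ x} (1*f)(n) + O(1), where 1*f denotes the Dirichlet convolution of the constant function 1 with f, and the implied constant is absolute. -/
open Finset

lemma swap_div_sum (f : ℕ → ℝ) (N : ℕ) :
    (∑ n ∈ Icc 1 N, ∑ d ∈ n.divisors, f d)
      = ∑ d ∈ Icc 1 N, f d * (N / d : ℕ) := by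
  have h1 : ∀ n ∈ Icc 1 N, (∑ d ∈ n.divisors, f d)
      = ∑ d ∈ (Icc 1 N).filter (· ∣ n), f d := by
    intro n hn
    simp only [mem_Icc] at hn
    apply Finset.sum_congr _ (fun _ _ => rfl)
    ext d
    simp only [Nat.mem_divisors, mem_filter, mem_Icc]
    constructor
    · rintro ⟨hd, hn0⟩
      exact ⟨⟨Nat.one_le_iff_ne_zero.2 (fun h => by simp [h] at hd; omega),
        le_trans (Nat.le_of_dvd (by omega) hd) hn.2⟩, hd⟩
    · rintro ⟨_, hd⟩
      exact ⟨hd, by omega⟩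
  rw [Finset.sum_congr rfl h1]
  simp only [Finset.sum_filter]
  rw [Finset.sum_comm]
  apply Finset.sum_congr rfl
  intro d hd
  rw [← Finset.sum_filter, Finset.sum_const, nsmul_eq_mul, mul_comm]
  congr 1
  have : Icc 1 N = Ioc 0 N := rfl
  rw [show (Icc 1 N).filter (d ∣ ·) = (Ioc 0 N).filter (d ∣ ·) by rw [this],
    Nat.Ioc_filter_dvd_card_eq_div]

/-- For any completely multiplicative `f : ℕ → ℝ` with values in `[-1,1]`
and any `x ≥ 2`, `∑_{n ≤ x} f(n)/n = (1/x) ∑_{n ≤ x} (1*f)(n) + O(1)` with an absolute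
implied constant, where `(1*f)(n) = ∑_{d ∣ n} f(d)` is the Dirichlet convolution. -/
theorem logSum_eq_convolution_mean_add_O1 :
    ∃ C : ℝ, 0 < C ∧ ∀ f : ℕ → ℝ,
      f 1 = 1 → (∀ m n : ℕ, f (m * n) = f m * f n) →
      (∀ n : ℕ, f n ∈ Set.Icc (-1 : ℝ) 1) →
      ∀ x : ℝ, 2 ≤ x →
        |(∑ n ∈ Finset.Icc 1 ⌊x⌋₊, f n / (n : ℝ)) -
          (1 / x) * ∑ n ∈ Finset.Icc 1 ⌊x⌋₊, ∑ d ∈ n.divisors, f d| ≤ C := by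
  refine ⟨1, one_pos, fun f _ _ hb x hx => ?_⟩
  have hx0 : (0:ℝ) < x := by linarith
  set N := ⌊x⌋₊ with hN
  have hNx : (N : ℝ) ≤ x := Nat.floor_le (le_of_lt hx0)
  have hxN : x < N + 1 := Nat.lt_floor_add_one x
  rw [swap_div_sum, Finset.mul_sum, ← Finset.sum_sub_distrib]
  calc |∑ d ∈ Icc 1 N, (f d / d - 1 / x * (f d * (N / d : ℕ)))|
      ≤ ∑ d ∈ Icc 1 N, |f d / d - 1 / x * (f d * (N / d : ℕ))| :=
        Finset.abs_sum_le_sum_abs _ _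
    _ ≤ ∑ d ∈ Icc 1 N, (1 / x) := by
        apply Finset.sum_le_sum
        intro d hd
        simp only [mem_Icc] at hd
        have hd0 : (0:ℝ) < d := by exact_mod_cast hd.1
        have key : f d / d - 1 / x * (f d * (N / d : ℕ))
            = f d * (1 / d - (N / d : ℕ) / x) := by ring
        rw [key, abs_mul]
        have hfb : |f d| ≤ 1 := abs_le.2 ⟨(hb d).1, (hb d).2⟩
        have hdiv1 : (d : ℝ) * (N / d : ℕ) ≤ x := by
          calc (d : ℝ) * (N / d : ℕ) = ((d * (N / d) : ℕ) : ℝ) := by push_cast; ring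
            _ ≤ (N : ℝ) := by exact_mod_cast Nat.mul_div_le N d
            _ ≤ x := hNx
        have hdiv2 : x - d ≤ (d : ℝ) * (N / d : ℕ) := by
          have hlt : N < (N / d + 1) * d := by
            have h1 := Nat.div_add_mod N d
            have h2 := Nat.mod_lt N (show 0 < d by omega)
            nlinarith
          have h2 : (N : ℝ) + 1 ≤ ((N / d : ℕ) + 1) * d := by exact_mod_cast hlt
          nlinarith
        have habs : |1 / (d:ℝ) - (N / d : ℕ) / x| ≤ 1 / x := by
          rw [abs_le]
          constructor
          · rw [div_sub_div _ _ (ne_of_gt hd0) (ne_of_gt hx0), neg_le, ← neg_div,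
              div_le_div_iff₀ (by positivity) hx0]
            nlinarith
          · rw [div_sub_div _ _ (ne_of_gt hd0) (ne_of_gt hx0),
              div_le_div_iff₀ (by positivity) hx0]
            nlinarith
        calc |f d| * |1 / (d:ℝ) - (N / d : ℕ) / x| ≤ 1 * (1 / x) :=
              mul_le_mul hfb habs (abs_nonneg _) zero_le_one
          _ = 1 / x := one_mul _
    _ = N * (1 / x) := by rw [Finset.sum_const, Nat.card_Icc]; simp [nsmul_eq_mul]
    _ ≤ 1 := by rw [mul_one_div, div_le_one hx0]; exact hNx
end

section
/- For any multiplicative function f : ℕ → [0,1] and any x ≥ 2, the logarithmic mean satisfies L_f(x) ≫ M_f(x), i.e., (1/log x) ∑_{n ≤ x} f(n)/n ≥ C · (1/x) ∑_{n ≤ x} f(n) for some absolute constant C > 0. -/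
open Finset Real

lemma prod_primeFactors_pow (n : ℕ) (hn : n ≠ 0) :
    ∏ p ∈ n.primeFactors, p ^ n.factorization p = n := by
  rw [← Nat.prod_factorization_eq_prod_primeFactors]
  exact Nat.factorization_prod_pow_eq_self hn

lemma log_eq_sum_primeFactors (n : ℕ) (hn : 1 ≤ n) :
    Real.log n = ∑ p ∈ n.primeFactors, (n.factorization p : ℝ) * Real.log p := by
  conv_lhs => rw [← prod_primeFactors_pow n (Nat.one_le_iff_ne_zero.mp hn)]
  rw [Nat.cast_prod, Real.log_prod]
  · apply Finset.sum_congr rfl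
    intro p hp
    push_cast
    rw [Real.log_pow]
  · intro p hp
    have hp' := Nat.prime_of_mem_primeFactors hp
    exact_mod_cast pow_ne_zero _ hp'.pos.ne'

lemma theta_bound (K : ℕ) :
    ∑ p ∈ (Finset.range (K+1)).filter Nat.Prime, Real.log p ≤ K * Real.log 4 := by
  have h1 : ∑ p ∈ (Finset.range (K+1)).filter Nat.Prime, Real.log p
      = Real.log (primorial K) := by
    rw [primorial, Nat.cast_prod, Real.log_prod]
    intro p hp
    simp only [mem_filter] at hp
    exact_mod_cast hp.2.pos.ne'
  rw [h1]
  calc Real.log (primorial K) ≤ Real.log ((4:ℕ) ^ K) := by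
        apply Real.log_le_log (by exact_mod_cast (primorial_pos K))
        exact_mod_cast primorial_le_4_pow K
    _ = K * Real.log 4 := by
        push_cast
        rw [Real.log_pow]

lemma Q_bound (K : ℕ) :
    ∑ q ∈ (Finset.Icc 1 K).filter IsPrimePow, Real.log q ≤ 35 * K := by
  rcases Nat.eq_zero_or_pos K with hK | hK
  · subst hK; simp
  have hK0 : K ≠ 0 := hK.ne'
  have hK1 : (1:ℝ) ≤ K := by exact_mod_cast hK
  rw [← Finset.sum_filter_add_sum_filter_not ((Finset.Icc 1 K).filter IsPrimePow) Nat.Prime]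
  have hlogK0 : 0 ≤ Real.log K := Real.log_nonneg hK1
  -- part 1
  have h1 : ∑ q ∈ ((Finset.Icc 1 K).filter IsPrimePow).filter Nat.Prime, Real.log q
      ≤ 3 * K := by
    calc ∑ q ∈ ((Finset.Icc 1 K).filter IsPrimePow).filter Nat.Prime, Real.log q
        ≤ ∑ p ∈ (Finset.range (K+1)).filter Nat.Prime, Real.log p := by
          apply Finset.sum_le_sum_of_subset_of_nonneg
          · intro q hq
            simp only [mem_filter, mem_Icc, mem_range] at hq ⊢
            exact ⟨by omega, hq.2⟩
          · intro p hp _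
            simp only [mem_filter] at hp
            exact Real.log_nonneg (by exact_mod_cast hp.2.one_lt.le)
      _ ≤ K * Real.log 4 := theta_bound K
      _ ≤ 3 * K := by
          have h4 : Real.log 4 ≤ 3 := by
            have := Real.log_le_sub_one_of_pos (by norm_num : (0:ℝ) < 4)
            linarith
          nlinarith [hK1]
  -- part 2
  have h2 : ∑ q ∈ ((Finset.Icc 1 K).filter IsPrimePow).filter (fun q => ¬ Nat.Prime q),
      Real.log q ≤ 32 * K := by
    set G := ((Finset.Icc 1 K).filter IsPrimePow).filter (fun q => ¬ Nat.Prime q) with hG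
    have hcard : G.card ≤ Nat.sqrt K * Nat.log 2 K := by
      have : G.card ≤ ((Finset.Icc 2 (Nat.sqrt K)) ×ˢ (Finset.Icc 2 (Nat.log 2 K))).card := by
        apply Finset.card_le_card_of_injOn
          (fun q => (q.minFac, q.factorization q.minFac))
        · intro q hq
          simp only [Finset.mem_coe, hG, mem_filter, mem_Icc] at hq
          obtain ⟨⟨⟨hq1, hqK⟩, hpp⟩, hnp⟩ := hq
          have hkey := hpp.minFac_pow_factorization_eq
          have hp : q.minFac.Prime := Nat.minFac_prime (by
            intro h; rw [h] at hpp; exact not_isPrimePow_one hpp)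
          set p := q.minFac
          set a := q.factorization p with ha
          have h2q : 2 ≤ q := hpp.two_le
          have ha2 : 2 ≤ a := by
            by_contra h
            interval_cases a
            · simp at hkey; omega
            · simp at hkey; rw [← hkey] at hnp; exact hnp hp
          simp only [Finset.mem_coe, Finset.mem_product, mem_Icc]
          refine ⟨⟨hp.two_le, ?_⟩, ⟨ha2, ?_⟩⟩
          · rw [Nat.le_sqrt]
            calc p * p = p ^ 2 := (sq p).symm
              _ ≤ p ^ a := Nat.pow_le_pow_right hp.pos ha2
              _ = q := hkey
              _ ≤ K := hqK
          · rw [Nat.le_log_iff_pow_le (by norm_num) hK0]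
            calc 2 ^ a ≤ p ^ a := Nat.pow_le_pow_left hp.two_le a
              _ = q := hkey
              _ ≤ K := hqK
        · intro q1 h1 q2 h2 heq
          simp only [Finset.mem_coe, hG, mem_filter] at h1 h2
          simp only [Prod.mk.injEq] at heq
          have e1 := h1.1.2.minFac_pow_factorization_eq
          have e2 := h2.1.2.minFac_pow_factorization_eq
          rw [← e1, ← e2, heq.2, heq.1]
      simpa [Nat.card_Icc] using this.trans (by
        rw [Finset.card_product]
        simp [Nat.card_Icc]
        exact Nat.mul_le_mul (by omega) (by omega))
    have hsum : ∑ q ∈ G, Real.log q ≤ G.card * Real.log K := by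
      rw [← nsmul_eq_mul]
      apply Finset.sum_le_card_nsmul
      intro q hq
      simp only [hG, mem_filter, mem_Icc] at hq
      obtain ⟨⟨⟨h1q, hqK⟩, -⟩, -⟩ := hq
      exact Real.log_le_log (by exact_mod_cast h1q) (by exact_mod_cast hqK)
    -- analytic bounds
    have hl : (Nat.log 2 K : ℝ) ≤ 2 * Real.log K := by
      have hpow : (2:ℝ) ^ (Nat.log 2 K) ≤ K := by
        exact_mod_cast Nat.pow_log_le_self 2 hK0
      have := Real.log_le_log (by positivity) hpow
      rw [Real.log_pow] at this
      have hlog2 : (0.6931471803:ℝ) < Real.log 2 := Real.log_two_gt_d9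
      nlinarith [this]
    have hsK : (0:ℝ) ≤ Real.sqrt K := Real.sqrt_nonneg _
    have hs : (Nat.sqrt K : ℝ) ≤ Real.sqrt K := by
      have h1 : ((Nat.sqrt K : ℝ))^2 ≤ (K:ℝ) := by
        exact_mod_cast Nat.sqrt_le' K
      calc (Nat.sqrt K : ℝ) = Real.sqrt ((Nat.sqrt K : ℝ)^2) := by
            rw [Real.sqrt_sq (by positivity)]
        _ ≤ Real.sqrt K := Real.sqrt_le_sqrt h1
    have hlsq : (Real.log K)^2 ≤ 16 * Real.sqrt K := by
      set u := Real.sqrt (Real.sqrt K) with hu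
      have hK0' : (0:ℝ) ≤ K := by positivity
      have hu0 : 0 < u := Real.sqrt_pos.mpr (by
        apply Real.sqrt_pos.mpr; exact_mod_cast hK)
      have hlogu : Real.log K = 4 * Real.log u := by
        rw [hu, Real.log_sqrt hsK, Real.log_sqrt hK0']; ring
      have hub : Real.log u ≤ u := le_trans (Real.log_le_sub_one_of_pos hu0) (by linarith)
      have hu2 : u^2 = Real.sqrt K := Real.sq_sqrt hsK
      have hlogu0 : 0 ≤ Real.log u := by linarith [hlogK0, hlogu]
      nlinarith [hlogu, hub, hu2]
    have hKsq : Real.sqrt K * Real.sqrt K = K := Real.mul_self_sqrt (by positivity)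
    have hcard' : (G.card : ℝ) ≤ (Nat.sqrt K : ℝ) * (Nat.log 2 K : ℝ) := by
      exact_mod_cast hcard
    have hs0 : (0:ℝ) ≤ Nat.sqrt K := by positivity
    have hl0 : (0:ℝ) ≤ Nat.log 2 K := by positivity
    calc ∑ q ∈ G, Real.log q ≤ G.card * Real.log K := hsum
      _ ≤ (Real.sqrt K * (2 * Real.log K)) * Real.log K := by
          apply mul_le_mul _ le_rfl hlogK0 (by positivity)
          calc (G.card : ℝ) ≤ (Nat.sqrt K : ℝ) * (Nat.log 2 K : ℝ) := hcard'
            _ ≤ Real.sqrt K * (2 * Real.log K) := mul_le_mul hs hl hl0 hsK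
      _ = 2 * Real.sqrt K * (Real.log K)^2 := by ring
      _ ≤ 2 * Real.sqrt K * (16 * Real.sqrt K) := by
          apply mul_le_mul_of_nonneg_left hlsq (by positivity)
      _ = 32 * (Real.sqrt K * Real.sqrt K) := by ring
      _ = 32 * K := by rw [hKsq]
  linarith

lemma stirling_lb (N : ℕ) (hN : 1 ≤ N) :
    (N:ℝ) * Real.log N - N + 1 ≤ ∑ n ∈ Finset.Icc 1 N, Real.log n := by
  induction N, hN using Nat.le_induction with
  | base => simp
  | succ N hN ih =>
    rw [Finset.sum_Icc_succ_top (by omega)]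
    have hN0 : (0:ℝ) < N := by exact_mod_cast hN
    have hkey : (N:ℝ) * Real.log (N+1) - (N:ℝ) * Real.log N ≤ 1 := by
      have h1 : Real.log ((N+1)/N) ≤ (N+1)/(N:ℝ) - 1 :=
        Real.log_le_sub_one_of_pos (by positivity)
      rw [Real.log_div (by positivity) (by positivity)] at h1
      have h2 : ((N:ℝ)+1)/(N:ℝ) - 1 = 1/(N:ℝ) := by field_simp; ring
      rw [h2] at h1
      have h3 : (N:ℝ) * (Real.log (N+1) - Real.log N) ≤ (N:ℝ) * (1/(N:ℝ)) :=
        mul_le_mul_of_nonneg_left (by push_cast; linarith) (by positivity)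
      rw [mul_one_div, div_self hN0.ne'] at h3
      linarith
    push_cast
    nlinarith [ih]

lemma swap_bound (f : ℕ → ℝ)
    (hmul : ∀ m n : ℕ, Nat.Coprime m n → f (m * n) = f m * f n)
    (hficc : ∀ n : ℕ, f n ∈ Set.Icc (0 : ℝ) 1) (N : ℕ) :
    ∑ n ∈ Finset.Icc 1 N, f n * Real.log n ≤
      ∑ m ∈ Finset.Icc 1 N, f m *
        ∑ q ∈ (Finset.Icc 1 (N/m)).filter IsPrimePow, Real.log q := by
  have hlhs : ∑ n ∈ Finset.Icc 1 N, f n * Real.log n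
      = ∑ σ ∈ (Finset.Icc 1 N).sigma (fun n => n.primeFactors),
          f σ.1 * ((σ.1.factorization σ.2 : ℝ) * Real.log σ.2) := by
    rw [Finset.sum_sigma]
    apply Finset.sum_congr rfl
    intro n hn
    rw [log_eq_sum_primeFactors n (Finset.mem_Icc.mp hn).1, Finset.mul_sum]
  have hrhs : ∑ m ∈ Finset.Icc 1 N, f m *
        ∑ q ∈ (Finset.Icc 1 (N/m)).filter IsPrimePow, Real.log q
      = ∑ τ ∈ (Finset.Icc 1 N).sigma
          (fun m => (Finset.Icc 1 (N/m)).filter IsPrimePow),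
          f τ.1 * Real.log τ.2 := by
    rw [Finset.sum_sigma]
    apply Finset.sum_congr rfl
    intro m hm
    rw [Finset.mul_sum]
  rw [hlhs, hrhs]
  set s := (Finset.Icc 1 N).sigma (fun n => n.primeFactors) with hs
  set t := (Finset.Icc 1 N).sigma
      (fun m => (Finset.Icc 1 (N/m)).filter IsPrimePow) with ht
  set e : (Σ _ : ℕ, ℕ) → (Σ _ : ℕ, ℕ) :=
      fun σ => ⟨σ.1 / σ.2 ^ σ.1.factorization σ.2, σ.2 ^ σ.1.factorization σ.2⟩ with he
  -- facts about elements of s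
  have hfact : ∀ σ ∈ s, σ.2.Prime ∧ 1 ≤ σ.1.factorization σ.2 ∧
      σ.2 ^ σ.1.factorization σ.2 ∣ σ.1 ∧ 1 ≤ σ.1 ∧ σ.1 ≤ N := by
    rintro ⟨n, p⟩ hσ
    rw [hs, Finset.mem_sigma, Finset.mem_Icc] at hσ
    obtain ⟨⟨h1n, hnN⟩, hp⟩ := hσ
    have hpp := Nat.prime_of_mem_primeFactors hp
    refine ⟨hpp, ?_, Nat.ordProj_dvd n p, h1n, hnN⟩
    exact (Nat.Prime.factorization_pos_of_dvd hpp (by omega)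
      (Nat.dvd_of_mem_primeFactors hp))
  calc ∑ σ ∈ s, f σ.1 * ((σ.1.factorization σ.2 : ℝ) * Real.log σ.2)
      ≤ ∑ σ ∈ s, f (e σ).1 * Real.log (e σ).2 := by
        apply Finset.sum_le_sum
        rintro ⟨n, p⟩ hσ
        obtain ⟨hpp, hv, hdvd, h1n, hnN⟩ := hfact _ hσ
        dsimp only at hpp hv hdvd h1n hnN ⊢
        set v := n.factorization p with hvdef
        set q := p ^ v with hq
        set m := n / q with hm
        have hmq : m * q = n := Nat.div_mul_cancel hdvd
        have hndvd : ¬ p ∣ m := Nat.not_dvd_ordCompl hpp (by omega)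
        have hcop : Nat.Coprime q m :=
          Nat.Coprime.pow_left _ ((Nat.Prime.coprime_iff_not_dvd hpp).mpr hndvd)
        have hfn : f n = f q * f m := by
          rw [← hmq, mul_comm m q]; exact hmul q m hcop
        have hlog : (v : ℝ) * Real.log p = Real.log q := by
          rw [hq]; push_cast; rw [Real.log_pow]
        have hq1 : 1 ≤ q := Nat.one_le_iff_ne_zero.mpr (pow_ne_zero _ hpp.pos.ne')
        have hlogq : 0 ≤ Real.log q := Real.log_nonneg (by exact_mod_cast hq1)
        have hfq := hficc q
        have hfm := hficc m
        simp only [Set.mem_Icc] at hfq hfm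
        show f n * ((v:ℝ) * Real.log p) ≤ f m * Real.log q
        rw [hlog, hfn]
        apply mul_le_mul_of_nonneg_right _ hlogq
        nlinarith [hfq.1, hfq.2, hfm.1]
    _ = ∑ τ ∈ s.image e, f τ.1 * Real.log τ.2 := by
        rw [Finset.sum_image]
        rintro ⟨n1, p1⟩ h1 ⟨n2, p2⟩ h2 heq
        obtain ⟨hpp1, hv1, hdvd1, h1n1, -⟩ := hfact _ h1
        obtain ⟨hpp2, hv2, hdvd2, h1n2, -⟩ := hfact _ h2
        dsimp only at hpp1 hv1 hdvd1 h1n1 hpp2 hv2 hdvd2 h1n2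
        simp only [he, Sigma.mk.inj_iff, heq_eq_eq] at heq
        obtain ⟨hm12, hq12⟩ := heq
        have hp12 : p1 = p2 := by
          have e1 : (p1 ^ n1.factorization p1).minFac = p1 :=
            Nat.Prime.pow_minFac hpp1 (by omega)
          have e2 : (p2 ^ n2.factorization p2).minFac = p2 :=
            Nat.Prime.pow_minFac hpp2 (by omega)
          rw [← e1, ← e2, hq12]
        have hn12 : n1 = n2 := by
          have e1 := Nat.div_mul_cancel hdvd1
          have e2 := Nat.div_mul_cancel hdvd2
          rw [← e1, ← e2, hm12, hq12]
        subst hp12 hn12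
        rfl
    _ ≤ ∑ τ ∈ t, f τ.1 * Real.log τ.2 := by
        apply Finset.sum_le_sum_of_subset_of_nonneg
        · intro τ hτ
          rw [Finset.mem_image] at hτ
          obtain ⟨σ, hσ, rfl⟩ := hτ
          obtain ⟨n, p⟩ := σ
          obtain ⟨hpp, hv, hdvd, h1n, hnN⟩ := hfact _ hσ
          dsimp only at hpp hv hdvd h1n hnN ⊢
          simp only [he]
          rw [ht, Finset.mem_sigma, Finset.mem_Icc, Finset.mem_filter, Finset.mem_Icc]
          dsimp only
          set v := n.factorization p
          set q := p ^ v with hqdef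
          set m := n / q with hmdef
          have hq1 : 1 ≤ q := Nat.one_le_iff_ne_zero.mpr (pow_ne_zero _ hpp.pos.ne')
          have hm1 : 1 ≤ m := Nat.one_le_div_iff (by omega) |>.mpr (Nat.le_of_dvd (by omega) hdvd)
          have hmq : m * q = n := Nat.div_mul_cancel hdvd
          refine ⟨⟨hm1, le_trans (Nat.div_le_self n q) hnN⟩, ⟨⟨hq1, ?_⟩, ?_⟩⟩
          · rw [Nat.le_div_iff_mul_le (by omega)]
            rw [mul_comm]
            omega
          · exact ⟨p, v, hpp.prime, by omega, rfl⟩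
        · intro τ hτ _
          rw [ht, Finset.mem_sigma, Finset.mem_Icc, Finset.mem_filter, Finset.mem_Icc] at hτ
          have hfm := hficc τ.1
          simp only [Set.mem_Icc] at hfm
          have : 0 ≤ Real.log τ.2 := Real.log_nonneg (by exact_mod_cast hτ.2.1.1)
          exact mul_nonneg hfm.1 this


/-- **Halberstam–Richert consequence.** For any multiplicative `f : ℕ → [0,1]`
and any `x ≥ 2`, `L_f(x) ≥ C · M_f(x)` for an absolute constant `C > 0`. -/
theorem logMean_gg_mean_of_nonneg :
    ∃ C : ℝ, 0 < C ∧ ∀ f : ℕ → ℝ,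
      f 1 = 1 → (∀ m n : ℕ, Nat.Coprime m n → f (m * n) = f m * f n) →
      (∀ n : ℕ, f n ∈ Set.Icc (0 : ℝ) 1) →
      ∀ x : ℝ, 2 ≤ x →
        (1 / Real.log x) * ∑ n ∈ Finset.Icc 1 ⌊x⌋₊, f n / (n : ℝ) ≥
          C * ((1 / x) * ∑ n ∈ Finset.Icc 1 ⌊x⌋₊, f n) := by
  refine ⟨1/36, by norm_num, ?_⟩
  intro f hf1 hmul hficc x hx
  set N := ⌊x⌋₊ with hNdef
  have hx0 : (0:ℝ) < x := by linarith
  have hN2 : 2 ≤ N := Nat.le_floor (by exact_mod_cast hx)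
  have hNx : (N:ℝ) ≤ x := Nat.floor_le (by linarith)
  have hxN1 : x < N + 1 := Nat.lt_floor_add_one x
  have hlogx : 0 < Real.log x := Real.log_pos (by linarith)
  set S := ∑ n ∈ Finset.Icc 1 N, f n with hS
  set T := ∑ n ∈ Finset.Icc 1 N, f n / (n:ℝ) with hT
  have hfnn : ∀ n, 0 ≤ f n := fun n => (hficc n).1
  have hfle : ∀ n, f n ≤ 1 := fun n => (hficc n).2
  have hT1 : 1 ≤ T := by
    have h1mem : 1 ∈ Finset.Icc 1 N := Finset.mem_Icc.mpr ⟨le_refl 1, by omega⟩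
    have := Finset.single_le_sum (f := fun n => f n / (n:ℝ))
      (fun i _ => div_nonneg (hfnn i) (by positivity)) h1mem
    simpa [hf1] using this
  have hTnn : 0 ≤ T := by linarith
  -- A bound
  have hA : ∑ n ∈ Finset.Icc 1 N, f n * Real.log n ≤ 35 * (x * T) := by
    calc ∑ n ∈ Finset.Icc 1 N, f n * Real.log n
        ≤ ∑ m ∈ Finset.Icc 1 N, f m *
            ∑ q ∈ (Finset.Icc 1 (N/m)).filter IsPrimePow, Real.log q :=
          swap_bound f hmul hficc N
      _ ≤ ∑ m ∈ Finset.Icc 1 N, f m * (35 * (x / (m:ℝ))) := by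
          apply Finset.sum_le_sum
          intro m hm
          have hm1 : 1 ≤ m := (Finset.mem_Icc.mp hm).1
          have hm0 : (0:ℝ) < m := by exact_mod_cast hm1
          apply mul_le_mul_of_nonneg_left _ (hfnn m)
          calc ∑ q ∈ (Finset.Icc 1 (N/m)).filter IsPrimePow, Real.log q
              ≤ 35 * ((N/m : ℕ) : ℝ) := Q_bound (N/m)
            _ ≤ 35 * (x / (m:ℝ)) := by
                apply mul_le_mul_of_nonneg_left _ (by norm_num)
                calc ((N/m : ℕ) : ℝ) ≤ (N:ℝ) / (m:ℝ) := Nat.cast_div_le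
                  _ ≤ x / (m:ℝ) := by gcongr
      _ = ∑ m ∈ Finset.Icc 1 N, 35 * (x * (f m / (m:ℝ))) := by
          apply Finset.sum_congr rfl
          intro m hm
          have hm1 : 1 ≤ m := (Finset.mem_Icc.mp hm).1
          have hm0 : (m:ℝ) ≠ 0 := by positivity
          field_simp
      _ = 35 * (x * T) := by
          rw [hT, Finset.mul_sum, Finset.mul_sum]
  -- B bound
  have hB : ∑ n ∈ Finset.Icc 1 N, f n * (Real.log x - Real.log n) ≤ x * T := by
    have hstep : ∑ n ∈ Finset.Icc 1 N, f n * (Real.log x - Real.log n)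
        ≤ ∑ n ∈ Finset.Icc 1 N, (Real.log x - Real.log n) := by
      apply Finset.sum_le_sum
      intro n hn
      obtain ⟨hn1, hnN⟩ := Finset.mem_Icc.mp hn
      have hlogn : Real.log n ≤ Real.log x := by
        apply Real.log_le_log (by exact_mod_cast hn1)
        calc (n:ℝ) ≤ (N:ℝ) := by exact_mod_cast hnN
          _ ≤ x := hNx
      nlinarith [hfnn n, hfle n]
    have hsum : ∑ n ∈ Finset.Icc 1 N, (Real.log x - Real.log n)
        = N * Real.log x - ∑ n ∈ Finset.Icc 1 N, Real.log n := by
      rw [Finset.sum_sub_distrib, Finset.sum_const, Nat.card_Icc]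
      simp [nsmul_eq_mul]
    have hstir := stirling_lb N (by omega)
    have hN0 : (0:ℝ) < N := by exact_mod_cast (by omega : 0 < N)
    have hlogx_le : Real.log x ≤ Real.log (N+1) := by
      apply Real.log_le_log hx0
      push_cast
      linarith
    have hNlog : (N:ℝ) * Real.log (N+1) - (N:ℝ) * Real.log N ≤ 1 := by
      have h1 : Real.log (((N:ℝ)+1)/N) ≤ ((N:ℝ)+1)/N - 1 :=
        Real.log_le_sub_one_of_pos (by positivity)
      rw [Real.log_div (by positivity) (by positivity)] at h1
      have h2 : ((N:ℝ)+1)/(N:ℝ) - 1 = 1/(N:ℝ) := by field_simp; ring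
      rw [h2] at h1
      have h3 : (N:ℝ) * (Real.log ((N:ℝ)+1) - Real.log N) ≤ (N:ℝ) * (1/(N:ℝ)) :=
        mul_le_mul_of_nonneg_left h1 (by positivity)
      rw [mul_one_div, div_self hN0.ne'] at h3
      linarith
    have hxT : x ≤ x * T := by nlinarith
    calc ∑ n ∈ Finset.Icc 1 N, f n * (Real.log x - Real.log n)
        ≤ N * Real.log x - ∑ n ∈ Finset.Icc 1 N, Real.log n := by
          rw [← hsum]; exact hstep
      _ ≤ N * Real.log x - ((N:ℝ) * Real.log N - N + 1) := by linarith
      _ ≤ (N:ℝ) := by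
          have : (N:ℝ) * Real.log x ≤ (N:ℝ) * Real.log (N+1) := by
            apply mul_le_mul_of_nonneg_left _ (le_of_lt hN0)
            push_cast at hlogx_le ⊢
            exact hlogx_le
          push_cast at hNlog this ⊢
          linarith
      _ ≤ x := hNx
      _ ≤ x * T := hxT
  -- combine
  have hkey : S * Real.log x ≤ 36 * (x * T) := by
    have hsplit : S * Real.log x
        = ∑ n ∈ Finset.Icc 1 N, f n * Real.log n
          + ∑ n ∈ Finset.Icc 1 N, f n * (Real.log x - Real.log n) := by
      rw [hS, ← Finset.sum_add_distrib, Finset.sum_mul]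
      apply Finset.sum_congr rfl
      intro n hn
      ring
    rw [hsplit]
    linarith
  rw [ge_iff_le, show (1/Real.log x) * T = T / Real.log x by ring,
    show (1/36:ℝ) * ((1/x) * S) = S / (36*x) by ring]
  rw [div_le_div_iff₀ (by positivity) hlogx]
  nlinarith [hkey]
end

section
/- Assume: (i) for every even primitive quadratic Dirichlet character χ mod q, max_{t ≤ q} |∑_{n ≤ t} χ(n)| = o(√q log q) as q → ∞; (ii) Lemma B (the mean-to-logarithmic-mean implication for completely multiplicative f : ℕ → [-1,1]); (iii) the lower bound of Lemma 2.1 relating character sums of χ = ξψ to partial logarithmic sums of ξ. Then for every ε > 0 and every c > 0, for all sufficiently large primes p, every odd primitive quadratic character ξ mod p satisfies |∑_{n ≤ t} ξ(n)| < c·t for all t > p^ε. -/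
open DirichletCharacter

lemma quad_abs_le {p : ℕ} (ξ : DirichletCharacter ℝ p) (h : ξ ^ 2 = 1) (x : ZMod p) :
    |ξ x| ≤ 1 := by
  have h2 : ξ x ^ 2 = (1 : DirichletCharacter ℝ p) x := by
    rw [← h, MulChar.pow_apply' ξ two_ne_zero]
  by_cases hx : IsUnit x
  · rw [MulChar.one_apply hx] at h2
    nlinarith [abs_nonneg (ξ x), sq_abs (ξ x)]
  · rw [ξ.map_nonunit hx]; norm_num

noncomputable def psi4 : DirichletCharacter ℝ 4 := (ZMod.χ₄).ringHomComp (Int.castRingHom ℝ)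

lemma psi4_apply (a : ZMod 4) : psi4 a = ((ZMod.χ₄ a : ℤ) : ℝ) := rfl

lemma psi4_three : psi4 (3 : ZMod 4) = -1 := by
  rw [psi4_apply, show ZMod.χ₄ (3 : ZMod 4) = -1 from by decide]; norm_num

lemma psi4_odd : psi4.Odd := by
  show psi4 (-1) = -1
  rw [show (-1 : ZMod 4) = 3 from by decide]; exact psi4_three

lemma psi4_sq : psi4 ^ 2 = 1 := by
  apply MulChar.ext
  intro a
  rw [MulChar.pow_apply_coe, MulChar.one_apply_coe, psi4_apply]
  have : (ZMod.χ₄ (a : ZMod 4)) ^ 2 = 1 := by revert a; decide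
  rw [← Int.cast_pow, this]; norm_num

def u3 : (ZMod 4)ˣ := ⟨3, 3, by decide, by decide⟩

lemma psi4_primitive : psi4.IsPrimitive := by
  have hmem := factorsThrough_conductor psi4
  have hdvd : psi4.conductor ∣ 4 := conductor_dvd_level psi4
  have hle : psi4.conductor ≤ 4 := Nat.le_of_dvd (by norm_num) hdvd
  rw [IsPrimitive]
  interval_cases h : psi4.conductor
  · exact absurd (conductor_eq_zero_iff_level_eq_zero.mp h) (by norm_num)
  · exfalso
    have h1 : psi4 = 1 := (factorsThrough_one_iff psi4).mp (h ▸ hmem)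
    have := psi4_three
    rw [h1, show (3 : ZMod 4) = (u3 : ZMod 4) from rfl, MulChar.one_apply_coe] at this
    norm_num at this
  · exfalso
    obtain ⟨hd2, χ₀, hχ₀⟩ := hmem
    have heval : psi4 (u3 : ZMod 4) = χ₀ (ZMod.cast ((u3 : ZMod 4))) := by
      rw [hχ₀]; exact changeLevel_eq_cast_of_dvd χ₀ hd2 u3
    rw [show ((u3 : (ZMod 4)ˣ) : ZMod 4) = (3 : ZMod 4) from rfl, psi4_three,
      show (ZMod.cast (3 : ZMod 4) : ZMod 2) = 1 from by decide, map_one] at heval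
    norm_num at heval
  · exact absurd hdvd (by norm_num)
  · rfl

noncomputable def chiP (p : ℕ) (ξ : DirichletCharacter ℝ p) : DirichletCharacter ℝ (p*4) :=
  changeLevel (dvd_mul_right p 4) ξ * changeLevel (dvd_mul_left 4 p) psi4

lemma changeLevel_natCast_unit {n m : ℕ} (h : n ∣ m) (χ : DirichletCharacter ℝ n) (a : ℕ)
    (ha : a.Coprime m) : (changeLevel h χ) (a : ZMod m) = χ ((a : ZMod n)) := by
  have hu : ((ZMod.unitOfCoprime a ha : (ZMod m)ˣ) : ZMod m) = (a : ZMod m) :=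
    ZMod.coe_unitOfCoprime a ha
  rw [← hu, changeLevel_eq_cast_of_dvd, hu, ZMod.cast_natCast h]

lemma chiP_apply (p : ℕ) [NeZero p] (ξ : DirichletCharacter ℝ p) (n : ℕ) :
    chiP p ξ (n : ZMod (p*4)) = ξ (n : ZMod p) * psi4 (n : ZMod 4) := by
  by_cases h : n.Coprime (p*4)
  · rw [chiP, MulChar.coeToFun_mul, Pi.mul_apply,
      changeLevel_natCast_unit _ _ _ h, changeLevel_natCast_unit _ _ _ h]
  · have hnu : ¬ IsUnit ((n : ZMod (p*4))) := by
      rw [ZMod.isUnit_iff_coprime]; exact h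
    rw [MulChar.map_nonunit _ hnu]
    by_cases hp' : n.Coprime p
    · have h4 : ¬ n.Coprime 4 := fun h4 => h (Nat.Coprime.mul_right hp' h4)
      rw [MulChar.map_nonunit psi4 (by rw [ZMod.isUnit_iff_coprime]; exact h4), mul_zero]
    · rw [MulChar.map_nonunit ξ (by rw [ZMod.isUnit_iff_coprime]; exact hp'), zero_mul]

lemma chiP_primitive (p : ℕ) (hp : p.Prime) (hp2 : p ≠ 2) (ξ : DirichletCharacter ℝ p)
    (hξ : ξ.IsPrimitive) : (chiP p ξ).IsPrimitive := by
  haveI : NeZero p := ⟨hp.pos.ne'⟩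
  have hcop : Nat.Coprime p 4 :=
    Nat.Coprime.pow_right 2 ((Nat.coprime_primes hp Nat.prime_two).mpr hp2)
  have claim : ∀ d : ℕ, (chiP p ξ).FactorsThrough d → d = p * 4 := by
    rintro d ⟨hdvd, χ₀, hfac⟩
    have eval : ∀ a : ℕ, a.Coprime (p*4) →
        χ₀ ((a : ZMod d)) = ξ (a : ZMod p) * psi4 (a : ZMod 4) := by
      intro a ha
      rw [← chiP_apply p ξ a, hfac, changeLevel_natCast_unit hdvd χ₀ a ha]
    by_cases hpd : p ∣ d
    · have hdval : p * (d / p) = d := Nat.mul_div_cancel' hpd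
      have he4 : d / p ∣ 4 := by
        rw [← Nat.mul_dvd_mul_iff_left hp.pos, hdval]; exact hdvd
      by_cases he : d / p = 4
      · rw [← hdval, he]
      · exfalso
        have hd2p : d ∣ p * 2 := by
          have : d / p ∣ 2 := by
            have h4 : d / p ≤ 4 := Nat.le_of_dvd (by norm_num) he4
            interval_cases h : (d / p) <;> revert he4 he <;> decide
          rw [← hdval]; exact Nat.mul_dvd_mul_left p this
        obtain ⟨k, hk1, hk2⟩ := Nat.chineseRemainder hcop 1 3
        have hkp : (k : ZMod p) = 1 := by
          rw [ZMod.natCast_eq_natCast_iff _ _ _ |>.mpr hk1, Nat.cast_one]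
        have hk4 : (k : ZMod 4) = 3 := by
          rw [ZMod.natCast_eq_natCast_iff _ _ _ |>.mpr hk2]; norm_num
        have hkcop : k.Coprime (p*4) := by
          refine Nat.Coprime.mul_right ?_ ?_
          · exact (ZMod.isUnit_iff_coprime k p).mp (by rw [hkp]; exact isUnit_one)
          · exact (ZMod.isUnit_iff_coprime k 4).mp (by rw [hk4]; decide)
        have hmodd : k ≡ 1 [MOD d] := by
          refine Nat.ModEq.of_dvd hd2p ?_
          refine (Nat.modEq_and_modEq_iff_modEq_mul (Nat.Coprime.coprime_dvd_right (by norm_num : (2:ℕ) ∣ 4) hcop)).mp ⟨hk1, ?_⟩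
          have h4 : k % 4 = 3 := hk2
          show k % 2 = 1 % 2
          omega
        have e1 := eval k hkcop
        have e2 := eval 1 (Nat.coprime_one_left _)
        rw [(ZMod.natCast_eq_natCast_iff _ _ _).mpr hmodd, e2] at e1
        rw [hkp, hk4, psi4_three, map_one] at e1
        push_cast at e1
        rw [map_one, map_one] at e1
        norm_num at e1
    · exfalso
      have hcd : Nat.Coprime d p :=
        Nat.Coprime.symm ((Nat.Prime.coprime_iff_not_dvd hp).mpr hpd)
      have hd4 : d ∣ 4 := hcd.dvd_of_dvd_mul_left hdvd
      have hxi1 : ξ = 1 := by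
        apply MulChar.ext
        intro u
        obtain ⟨k, hk1, hk2⟩ := Nat.chineseRemainder hcop ((u : ZMod p).val) 1
        have hkp : (k : ZMod p) = (u : ZMod p) := by
          rw [(ZMod.natCast_eq_natCast_iff _ _ _).mpr hk1]
          exact ZMod.natCast_rightInverse _
        have hk4 : (k : ZMod 4) = 1 := by
          rw [(ZMod.natCast_eq_natCast_iff _ _ _).mpr hk2, Nat.cast_one]
        have hkcop : k.Coprime (p*4) := by
          refine Nat.Coprime.mul_right ?_ ?_
          · exact (ZMod.isUnit_iff_coprime k p).mp (by rw [hkp]; exact u.isUnit)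
          · exact (ZMod.isUnit_iff_coprime k 4).mp (by rw [hk4]; exact isUnit_one)
        have hmodd : k ≡ 1 [MOD d] := Nat.ModEq.of_dvd hd4 hk2
        have e1 := eval k hkcop
        have e2 := eval 1 (Nat.coprime_one_left _)
        rw [(ZMod.natCast_eq_natCast_iff _ _ _).mpr hmodd, e2] at e1
        rw [hkp, hk4] at e1
        rw [MulChar.one_apply_coe]
        simpa using e1.symm
      rw [IsPrimitive, hxi1, conductor_one] at hξ
      exact hp.one_lt.ne' hξ.symm  -- hξ : 1 = p
  exact claim _ (factorsThrough_conductor _)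

lemma sum_period {p : ℕ} [NeZero p] (ξ : DirichletCharacter ℝ p) (hξ : ξ ≠ 1) (N : ℕ) :
    ∑ n ∈ Finset.Icc 1 (N + p), ξ (n : ZMod p) = ∑ n ∈ Finset.Icc 1 N, ξ (n : ZMod p) := by
  have h0 : ∀ m : ℕ, Finset.Icc 1 m = Finset.Ioc 0 m := by
    intro m; ext x; simp [Finset.mem_Icc, Finset.mem_Ioc]; omega
  rw [h0, h0, ← Finset.sum_Ioc_consecutive _ (Nat.zero_le N) (Nat.le_add_right N p)]
  have hIoc : Finset.Ioc N (N + p) = Finset.Ico (N+1) (N+1+p) := by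
    ext x; simp [Finset.mem_Ioc, Finset.mem_Ico]; omega
  have hz : ∑ n ∈ Finset.Ioc N (N + p), ξ (n : ZMod p) = 0 := by
    rw [hIoc, Finset.sum_Ico_eq_sum_range]
    simp only [Nat.add_sub_cancel_left]
    have hb : ∑ k ∈ Finset.range p, ξ ((N + 1 + k : ℕ) : ZMod p)
        = ∑ x : ZMod p, ξ (((N + 1 : ℕ) : ZMod p) + x) := by
      refine Finset.sum_nbij' (fun k => (k : ZMod p)) (fun x => x.val) ?_ ?_ ?_ ?_ ?_
      · intro k _; exact Finset.mem_univ _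
      · intro x _; exact Finset.mem_range.mpr (ZMod.val_lt x)
      · intro k hk; exact ZMod.val_cast_of_lt (Finset.mem_range.mp hk)
      · intro x _; exact ZMod.natCast_rightInverse x
      · intro k _; push_cast; ring_nf
    rw [hb]
    have : ∑ x : ZMod p, ξ (((N + 1 : ℕ) : ZMod p) + x) = ∑ x : ZMod p, ξ x :=
      Fintype.sum_equiv (Equiv.addLeft ((N + 1 : ℕ) : ZMod p)) _ _ (fun x => rfl)
    rw [this]
    exact MulChar.sum_eq_zero_of_ne_one hξ
  rw [hz, add_zero]

lemma sum_mod {p : ℕ} [NeZero p] (ξ : DirichletCharacter ℝ p) (hξ : ξ ≠ 1) (m : ℕ) :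
    ∑ n ∈ Finset.Icc 1 m, ξ (n : ZMod p) = ∑ n ∈ Finset.Icc 1 (m % p), ξ (n : ZMod p) := by
  have key : ∀ j r : ℕ, ∑ n ∈ Finset.Icc 1 (r + j * p), ξ (n : ZMod p)
      = ∑ n ∈ Finset.Icc 1 r, ξ (n : ZMod p) := by
    intro j
    induction j with
    | zero => simp
    | succ j ih =>
      intro r
      have : r + (j+1) * p = (r + j * p) + p := by ring
      rw [this, sum_period ξ hξ, ih]
  conv_lhs => rw [show m = m % p + (m / p) * p by rw [Nat.mod_add_div']]
  exact key _ _

lemma abs_sum_le_card {p : ℕ} (ξ : DirichletCharacter ℝ p) (hsq : ξ ^ 2 = 1) (T : ℕ) :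
    |∑ n ∈ Finset.Icc 1 T, ξ (n : ZMod p)| ≤ T := by
  calc |∑ n ∈ Finset.Icc 1 T, ξ (n : ZMod p)| ≤ ∑ n ∈ Finset.Icc 1 T, |ξ (n : ZMod p)| :=
        Finset.abs_sum_le_sum_abs _ _
    _ ≤ ∑ n ∈ Finset.Icc 1 T, 1 := Finset.sum_le_sum (fun n _ => by
        have h2 : (ξ (n : ZMod p)) ^ 2 = (1 : DirichletCharacter ℝ p) (n : ZMod p) := by
          rw [← hsq, MulChar.pow_apply' ξ two_ne_zero]
        by_cases hx : IsUnit ((n : ZMod p))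
        · rw [MulChar.one_apply hx] at h2
          nlinarith [abs_nonneg (ξ (n : ZMod p)), sq_abs (ξ (n : ZMod p))]
        · rw [ξ.map_nonunit hx]; norm_num)
    _ = T := by simp

lemma not_coprime_four_iff (n : ℕ) : ¬ n.Coprime 4 ↔ 2 ∣ n := by
  rw [show (4:ℕ) = 2^2 from rfl, Nat.coprime_pow_right_iff two_pos,
    Nat.coprime_comm, Nat.Prime.coprime_iff_not_dvd Nat.prime_two, not_not]

lemma full_decomp {p : ℕ} (ξ : DirichletCharacter ℝ p) (T : ℕ) :
    ∑ n ∈ Finset.Icc 1 T, ξ (n : ZMod p) / (n : ℝ)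
      = (∑ n ∈ (Finset.Icc 1 T).filter (fun n => Nat.Coprime n 4), ξ (n : ZMod p) / (n : ℝ))
        + (ξ ((2:ℕ) : ZMod p) / 2) * ∑ m ∈ Finset.Icc 1 (T/2), ξ (m : ZMod p) / (m : ℝ) := by
  rw [← Finset.sum_filter_add_sum_filter_not (Finset.Icc 1 T) (fun n => Nat.Coprime n 4)]
  congr 1
  rw [Finset.mul_sum]
  refine Finset.sum_nbij' (fun n => n / 2) (fun m => 2 * m) ?_ ?_ ?_ ?_ ?_
  · intro n hn
    simp only [Finset.mem_filter, Finset.mem_Icc] at hn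
    obtain ⟨⟨h1, h2⟩, h3⟩ := hn
    have h2d : 2 ∣ n := (not_coprime_four_iff n).mp h3
    simp only [Finset.mem_Icc]
    constructor
    · omega
    · exact Nat.div_le_div_right h2
  · intro m hm
    simp only [Finset.mem_Icc] at hm
    simp only [Finset.mem_filter, Finset.mem_Icc]
    refine ⟨⟨by omega, ?_⟩, ?_⟩
    · rw [mul_comm]; exact (Nat.le_div_iff_mul_le two_pos).mp hm.2
    · rw [not_coprime_four_iff]; exact ⟨m, rfl⟩
  · intro n hn
    simp only [Finset.mem_filter, Finset.mem_Icc] at hn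
    exact Nat.mul_div_cancel' ((not_coprime_four_iff n).mp hn.2)
  · intro m _; exact Nat.mul_div_cancel_left m two_pos
  · intro n hn
    simp only [Finset.mem_filter, Finset.mem_Icc] at hn
    obtain ⟨⟨h1, h2⟩, h3⟩ := hn
    have h2d : 2 ∣ n := (not_coprime_four_iff n).mp h3
    obtain ⟨k, rfl⟩ := h2d
    have hk : 1 ≤ k := by omega
    beta_reduce
    rw [Nat.mul_div_cancel_left k two_pos]
    have hcast : ((2 * k : ℕ) : ZMod p) = ((2:ℕ) : ZMod p) * ((k:ℕ) : ZMod p) := by push_cast; ring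
    rw [hcast, map_mul]
    have hkR : (k : ℝ) ≠ 0 := by positivity
    push_cast
    field_simp

lemma full_bound {p : ℕ} (ξ : DirichletCharacter ℝ p) (B : ℕ) (M : ℝ) (hM0 : 0 ≤ M)
    (hM : ∀ T, 1 ≤ T → T ≤ B →
      |∑ n ∈ (Finset.Icc 1 T).filter (fun n => Nat.Coprime n 4), ξ (n : ZMod p) / (n : ℝ)| ≤ M)
    (habs2 : |ξ ((2:ℕ) : ZMod p)| ≤ 1) :
    ∀ N, N ≤ B → |∑ n ∈ Finset.Icc 1 N, ξ (n : ZMod p) / (n : ℝ)| ≤ 2 * M := by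
  intro N
  induction N using Nat.strong_induction_on with
  | _ N ih =>
    intro hNB
    rcases Nat.eq_zero_or_pos N with rfl | hN
    · simp; linarith
    · rw [full_decomp]
      have ih2 := ih (N / 2) (Nat.div_lt_self hN one_lt_two) (le_trans (Nat.div_le_self _ _) hNB)
      have h1 := hM N hN hNB
      calc |_ + ξ ((2:ℕ) : ZMod p) / 2 * ∑ m ∈ Finset.Icc 1 (N/2), ξ (m : ZMod p) / (m : ℝ)|
          ≤ _ + |ξ ((2:ℕ) : ZMod p) / 2 * _| := abs_add_le _ _
        _ ≤ M + |ξ ((2:ℕ) : ZMod p) / 2| * |∑ m ∈ Finset.Icc 1 (N/2), ξ (m : ZMod p) / (m : ℝ)| := by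
            rw [abs_mul]; exact add_le_add h1 le_rfl
        _ ≤ M + (1/2) * (2 * M) := by
            refine add_le_add le_rfl (mul_le_mul ?_ ih2 (abs_nonneg _) (by norm_num))
            rw [abs_div, show |(2:ℝ)| = 2 from abs_of_pos two_pos]
            set a := |ξ ((2:ℕ) : ZMod p)|
            linarith
        _ = 2 * M := by ring

lemma chiP_sq (p : ℕ) (ξ : DirichletCharacter ℝ p) (hξ : ξ ^ 2 = 1) :
    chiP p ξ ^ 2 = 1 := by
  rw [chiP, mul_pow, ← map_pow, ← map_pow, hξ, psi4_sq, map_one, map_one, one_mul]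

lemma chiP_even (p : ℕ) [NeZero p] (ξ : DirichletCharacter ℝ p) (hξ : ξ.Odd) :
    (chiP p ξ).Even := by
  have hunit : IsUnit (-1 : ZMod (p*4)) := IsUnit.neg isUnit_one
  show chiP p ξ (-1) = 1
  rw [chiP, MulChar.coeToFun_mul, Pi.mul_apply]
  have e1 : (changeLevel (dvd_mul_right p 4) ξ) (-1) = ξ (-1) := by
    rw [show (-1 : ZMod (p*4)) = ((hunit.unit : (ZMod (p*4))ˣ) : ZMod (p*4)) from
      (IsUnit.unit_spec hunit).symm, changeLevel_eq_cast_of_dvd]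
    congr 1
    rw [IsUnit.unit_spec]
    have : (ZMod.castHom (dvd_mul_right p 4) (ZMod p)) (-1 : ZMod (p*4)) = -1 := by
      rw [map_neg, map_one]
    rw [← this, ZMod.castHom_apply]
  have e2 : (changeLevel (dvd_mul_left 4 p) psi4) (-1) = psi4 (-1) := by
    rw [show (-1 : ZMod (p*4)) = ((hunit.unit : (ZMod (p*4))ˣ) : ZMod (p*4)) from
      (IsUnit.unit_spec hunit).symm, changeLevel_eq_cast_of_dvd]
    congr 1
    rw [IsUnit.unit_spec]
    have : (ZMod.castHom (dvd_mul_left 4 p) (ZMod 4)) (-1 : ZMod (p*4)) = -1 := by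
      rw [map_neg, map_one]
    rw [← this, ZMod.castHom_apply]
  rw [e1, e2, hξ, psi4_odd]
  norm_num

set_option maxHeartbeats 1600000 in
/-- **Theorem A.** Assuming (i) an `o(√q log q)` improvement of
Pólya–Vinogradov for even primitive quadratic characters, (ii) Lemma B, and (iii) the lower
bound of Lemma 2.1, every odd primitive quadratic character `ξ mod p` satisfies
`|S_ξ(t)| < c·t` for all `t > p^ε`, once `p` is sufficiently large. -/
theorem burgess_improvement_from_PV
    -- (i) improved Pólya–Vinogradov for even primitive quadratic characters
    (hPV : ∀ ε' : ℝ, 0 < ε' → ∃ Q : ℕ, ∀ q : ℕ, q > Q →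
      ∀ χ : DirichletCharacter ℝ q, χ.IsPrimitive → χ ^ 2 = 1 → χ.Even →
        ∀ N : ℕ, N ≤ q →
          |∑ n ∈ Finset.Icc 1 N, χ (n : ZMod q)| ≤ ε' * Real.sqrt q * Real.log q)
    -- (ii) Lemma B
    (hLemB : ∀ c : ℝ, 0 < c → ∃ δ : ℝ, 0 < δ ∧ ∃ x₀ : ℝ, 1 ≤ x₀ ∧
      ∀ f : ℕ → ℝ,
        f 1 = 1 → (∀ m n : ℕ, f (m * n) = f m * f n) →
        (∀ n : ℕ, f n ∈ Set.Icc (-1 : ℝ) 1) →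
        ∀ x : ℝ, x > x₀ →
          |(1 / x) * ∑ n ∈ Finset.Icc 1 ⌊x⌋₊, f n| ≥ c →
          (1 / Real.log x) * ∑ n ∈ Finset.Icc 1 ⌊x⌋₊, f n / (n : ℝ) ≥ δ)
    -- (iii) Lemma 2.1
    (hLem21 : ∃ C : ℝ, ∀ (k l : ℕ), 0 < k → 0 < l → Nat.Coprime k l →
      ∀ (ξ : DirichletCharacter ℝ k) (ψ : DirichletCharacter ℝ l),
        ξ.IsPrimitive → ψ.IsPrimitive → ξ.Odd → ψ.Odd →
        ∀ χ : DirichletCharacter ℝ (k * l),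
          (∀ n : ℕ, χ (n : ZMod (k * l)) = ξ (n : ZMod k) * ψ (n : ZMod l)) →
          (1 / Real.sqrt (k * l)) *
              (⨆ N ∈ Finset.Icc 1 (k * l),
                |∑ n ∈ Finset.Icc 1 N, χ (n : ZMod (k * l))|) ≥
            (Real.sqrt l / (Real.pi * (Nat.totient l : ℝ))) *
              (⨆ t ∈ Finset.Icc 1 (k * l),
                |∑ n ∈ (Finset.Icc 1 t).filter (fun n => Nat.Coprime n l),
                  ξ (n : ZMod k) / (n : ℝ)|) - C) :
    ∀ ε c : ℝ, 0 < ε → 0 < c → ∃ P : ℕ, ∀ p : ℕ, p.Prime → p > P →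
      ∀ ξ : DirichletCharacter ℝ p, ξ.IsPrimitive → ξ ^ 2 = 1 → ξ.Odd →
        ∀ t : ℝ, t > (p : ℝ) ^ ε →
          |∑ n ∈ Finset.Icc 1 ⌊t⌋₊, ξ (n : ZMod p)| < c * t := by
  intro ε c hε hc
  obtain ⟨δ, hδ, x₀, hx₀, hB⟩ := hLemB c hc
  obtain ⟨C, h21⟩ := hLem21
  have hπ : (0:ℝ) < Real.pi := Real.pi_pos
  set η : ℝ := min (ε/2) (1/4) with hη_def
  have hηpos : 0 < η := lt_min (by linarith) (by norm_num)
  have hηε : η ≤ ε/2 := min_le_left _ _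
  have hη4 : η ≤ 1/4 := min_le_right _ _
  set ε' : ℝ := δ * η / (16 * Real.pi) with hε'_def
  have hε'pos : 0 < ε' := by positivity
  obtain ⟨Q, hQ⟩ := hPV ε' hε'pos
  -- eventual largeness conditions
  have t1 : Filter.Tendsto (fun p : ℕ => ((p:ℝ))^(ε/2)) Filter.atTop Filter.atTop :=
    (tendsto_rpow_atTop (by linarith : (0:ℝ) < ε/2)).comp tendsto_natCast_atTop_atTop
  have t2 : Filter.Tendsto (fun p : ℕ => c * (p:ℝ)) Filter.atTop Filter.atTop :=
    Filter.Tendsto.const_mul_atTop hc tendsto_natCast_atTop_atTop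
  have t3 : Filter.Tendsto (fun p : ℕ => Real.log (p:ℝ)) Filter.atTop Filter.atTop :=
    Real.tendsto_log_atTop.comp tendsto_natCast_atTop_atTop
  have hev : ∀ᶠ (p : ℕ) in Filter.atTop,
      (Q < p ∧ 4 < p ∧ (2:ℝ) ≤ (p:ℝ)^(ε/2) ∧ x₀ < (p:ℝ)^(ε/2) ∧ x₀ + 1 ≤ c * (p:ℝ)
        ∧ -(2 * Real.log c) ≤ Real.log (p:ℝ)
        ∧ C < (3 * δ * η / (8 * Real.pi)) * Real.log (p:ℝ)) := by
    refine (Filter.eventually_gt_atTop Q).and <| (Filter.eventually_gt_atTop 4).and <|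
      (t1.eventually_ge_atTop 2).and <| (t1.eventually_gt_atTop x₀).and <|
      (t2.eventually_ge_atTop (x₀+1)).and <| (t3.eventually_ge_atTop _).and ?_
    have := t3.eventually_gt_atTop (C / (3 * δ * η / (8 * Real.pi)))
    filter_upwards [this] with p hp
    have hcoef : 0 < 3 * δ * η / (8 * Real.pi) := by positivity
    calc C = (3 * δ * η / (8 * Real.pi)) * (C / (3 * δ * η / (8 * Real.pi))) := by
            field_simp
      _ < (3 * δ * η / (8 * Real.pi)) * Real.log (p:ℝ) := by
            exact mul_lt_mul_of_pos_left hp hcoef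
  obtain ⟨P, hP⟩ := Filter.eventually_atTop.mp hev
  refine ⟨P, ?_⟩
  intro p hp hpP ξ hξprim hξsq hξodd t ht
  obtain ⟨hQp, hp4, hc3, hc4, hc5, hc6, hc7⟩ := hP p (le_of_lt hpP)
  haveI : NeZero p := ⟨hp.pos.ne'⟩
  by_contra hcon
  push_neg at hcon
  -- basic facts
  have hp1 : (1:ℝ) ≤ (p:ℝ) := by exact_mod_cast hp.pos
  have hppos : (0:ℝ) < (p:ℝ) := by positivity
  have hlogp : 0 ≤ Real.log (p:ℝ) := Real.log_nonneg hp1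
  have htpos : 0 < t := lt_trans (Real.rpow_pos_of_pos hppos ε) ht
  have hξne : ξ ≠ 1 := by
    intro h
    rw [IsPrimitive, h, conductor_one] at hξprim
    omega
  set f : ℕ → ℝ := fun n => ξ (n : ZMod p) with hf_def
  -- find a good natural scale T
  obtain ⟨T, hTx₀, hTp, hmean, hlogT⟩ :
      ∃ T : ℕ, x₀ < (T:ℝ) ∧ T ≤ p ∧ c * T ≤ |∑ n ∈ Finset.Icc 1 T, f n|
        ∧ η * Real.log (p:ℝ) ≤ Real.log ((T:ℕ):ℝ) := by
    have hrp2pos : (0:ℝ) < (p:ℝ)^(ε/2) := Real.rpow_pos_of_pos hppos _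
    rcases le_or_gt t (p:ℝ) with hcase | hcase
    · -- t ≤ p : take T = ⌊t⌋
      have hfl : t - 1 < (⌊t⌋₊ : ℝ) := Nat.sub_one_lt_floor t
      have hsq : (p:ℝ)^ε = ((p:ℝ)^(ε/2))^2 := by
        rw [← Real.rpow_natCast ((p:ℝ)^(ε/2)) 2, ← Real.rpow_mul (le_of_lt hppos)]
        norm_num
      have hx2 : (p:ℝ)^(ε/2) ≤ t - 1 := by nlinarith [ht, hc3]
      have hTgt : (p:ℝ)^(ε/2) < (⌊t⌋₊ : ℝ) := lt_of_le_of_lt hx2 hfl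
      have hTle : ⌊t⌋₊ ≤ p := by
        have h := Nat.floor_le_floor hcase
        rwa [Nat.floor_natCast] at h
      refine ⟨⌊t⌋₊, lt_trans hc4 hTgt, hTle, ?_, ?_⟩
      · calc c * (⌊t⌋₊ : ℝ) ≤ c * t :=
              mul_le_mul_of_nonneg_left (Nat.floor_le (le_of_lt htpos)) (le_of_lt hc)
          _ ≤ _ := hcon
      · calc η * Real.log p ≤ (ε/2) * Real.log p :=
              mul_le_mul_of_nonneg_right hηε hlogp
          _ = Real.log ((p:ℝ)^(ε/2)) := (Real.log_rpow hppos _).symm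
          _ ≤ Real.log (⌊t⌋₊ : ℝ) := Real.log_le_log hrp2pos (le_of_lt hTgt)
    · -- p < t : reduce mod p
      set m : ℕ := ⌊t⌋₊ with hm_def
      set T : ℕ := m % p with hT_def
      have hsum_eq : ∑ n ∈ Finset.Icc 1 m, f n = ∑ n ∈ Finset.Icc 1 T, f n :=
        sum_mod ξ hξne m
      have hST : c * t ≤ |∑ n ∈ Finset.Icc 1 T, f n| := by
        rw [← hsum_eq]; exact hcon
      have hTltp : T < p := Nat.mod_lt _ hp.pos
      have hcpct : c * (p:ℝ) < c * t := mul_lt_mul_of_pos_left hcase hc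
      have habsT : |∑ n ∈ Finset.Icc 1 T, f n| ≤ (T:ℝ) := abs_sum_le_card ξ hξsq T
      have hcpT : c * (p:ℝ) ≤ (T:ℝ) := le_trans (le_of_lt hcpct) (le_trans hST habsT)
      refine ⟨T, ?_, le_of_lt hTltp, ?_, ?_⟩
      · linarith
      · calc c * (T:ℝ) ≤ c * (p:ℝ) :=
              mul_le_mul_of_nonneg_left (by exact_mod_cast le_of_lt hTltp) (le_of_lt hc)
          _ ≤ c * t := le_of_lt hcpct
          _ ≤ _ := hST
      · have hcppos : (0:ℝ) < c * p := by positivity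
        calc η * Real.log p ≤ (1/2) * Real.log p :=
              mul_le_mul_of_nonneg_right (by linarith) hlogp
          _ ≤ Real.log c + Real.log p := by linarith
          _ = Real.log (c * p) := (Real.log_mul (ne_of_gt hc) (ne_of_gt hppos)).symm
          _ ≤ Real.log (T:ℝ) := Real.log_le_log hcppos hcpT
    -- apply Lemma B at x = T
  have hTx₀' : x₀ < (T:ℝ) := hTx₀
  have hT1 : (1:ℝ) < (T:ℝ) := by linarith
  have hTpos : (0:ℝ) < (T:ℝ) := by linarith
  have hf1 : f 1 = 1 := by simp [hf_def]
  have hfmul : ∀ m n : ℕ, f (m*n) = f m * f n := by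
    intro m n; simp only [hf_def, Nat.cast_mul, map_mul]
  have hfmem : ∀ n : ℕ, f n ∈ Set.Icc (-1:ℝ) 1 := by
    intro n
    have h := quad_abs_le ξ hξsq ((n:ℕ) : ZMod p)
    rw [Set.mem_Icc]
    constructor
    · linarith [neg_abs_le (f n)]
    · linarith [le_abs_self (f n)]
  have hmean' : |(1/(T:ℝ)) * ∑ n ∈ Finset.Icc 1 ⌊((T:ℕ):ℝ)⌋₊, f n| ≥ c := by
    rw [Nat.floor_natCast, abs_mul, abs_of_pos (by positivity : (0:ℝ) < 1/(T:ℝ)),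
      one_div_mul_eq_div, ge_iff_le, le_div_iff₀ hTpos]
    exact hmean
  have hlm := hB f hf1 hfmul hfmem ((T:ℕ):ℝ) hTx₀' hmean'
  rw [Nat.floor_natCast] at hlm
  have hlogTpos : 0 < Real.log ((T:ℕ):ℝ) := Real.log_pos hT1
  have hfullT : δ * η * Real.log (p:ℝ) ≤ ∑ n ∈ Finset.Icc 1 T, ξ ((n:ℕ) : ZMod p) / (n:ℝ) := by
    have h2 := mul_le_mul_of_nonneg_left hlm (le_of_lt hlogTpos)
    rw [← mul_assoc, mul_one_div, div_self (ne_of_gt hlogTpos), one_mul] at h2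
    have h3 : δ * Real.log ((T:ℕ):ℝ) ≤ ∑ n ∈ Finset.Icc 1 T, f n / (n:ℝ) := by linarith
    have h4 : ∑ n ∈ Finset.Icc 1 T, f n / (n:ℝ)
        = ∑ n ∈ Finset.Icc 1 T, ξ ((n:ℕ) : ZMod p) / (n:ℝ) := by rw [hf_def]
    calc δ * η * Real.log (p:ℝ) = δ * (η * Real.log (p:ℝ)) := by ring
      _ ≤ δ * Real.log ((T:ℕ):ℝ) := mul_le_mul_of_nonneg_left hlogT (le_of_lt hδ)
      _ ≤ _ := h4 ▸ h3
  -- instantiate Lemma 2.1 with k = p, l = 4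
  have hcop : Nat.Coprime p 4 :=
    Nat.Coprime.pow_right 2 ((Nat.coprime_primes hp Nat.prime_two).mpr (by omega))
  have h21' := h21 p 4 hp.pos (by norm_num) hcop ξ psi4 hξprim psi4_primitive hξodd psi4_odd
      (chiP p ξ) (chiP_apply p ξ)
  set M : ℝ := ⨆ t' ∈ Finset.Icc 1 (p*4), |∑ n ∈ (Finset.Icc 1 t').filter (fun n => Nat.Coprime n 4), ξ (n : ZMod p) / (n:ℝ)| with hMdef
  set S2 : ℝ := ⨆ N ∈ Finset.Icc 1 (p*4), |∑ n ∈ Finset.Icc 1 N, (chiP p ξ) ((n:ℕ) : ZMod (p*4))| with hS2def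
  have hone_mem : (1:ℕ) ∈ Finset.Icc 1 (p*4) := Finset.mem_Icc.mpr ⟨le_refl 1, by omega⟩
  have hne : (Finset.Icc 1 (p*4)).Nonempty := ⟨1, hone_mem⟩
  have hbdd : BddAbove (Set.range (fun t' : ℕ =>
      ⨆ _ : t' ∈ Finset.Icc 1 (p*4), |∑ n ∈ (Finset.Icc 1 t').filter (fun n => Nat.Coprime n 4), ξ (n : ZMod p) / (n:ℝ)|)) := by
    refine ⟨max 0 ((Finset.Icc 1 (p*4)).sup' hne (fun t' => |∑ n ∈ (Finset.Icc 1 t').filter (fun n => Nat.Coprime n 4), ξ (n : ZMod p) / (n:ℝ)|)), ?_⟩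
    rintro y ⟨t', rfl⟩
    dsimp only
    by_cases hmem : t' ∈ Finset.Icc 1 (p*4)
    · rw [ciSup_pos hmem]
      exact le_max_of_le_right (Finset.le_sup' (fun t'' : ℕ => |∑ n ∈ (Finset.Icc 1 t'').filter (fun n => Nat.Coprime n 4), ξ (n : ZMod p) / (n:ℝ)|) hmem)
    · haveI : IsEmpty (t' ∈ Finset.Icc 1 (p*4)) := ⟨hmem⟩
      rw [Real.iSup_of_isEmpty]
      exact le_max_left _ _
  have hMle : ∀ t' : ℕ, t' ∈ Finset.Icc 1 (p*4) → |∑ n ∈ (Finset.Icc 1 t').filter (fun n => Nat.Coprime n 4), ξ (n : ZMod p) / (n:ℝ)| ≤ M := by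
    intro t' hmem
    have h1 := le_ciSup hbdd t'
    rwa [ciSup_pos hmem] at h1
  have hM0 : 0 ≤ M := le_trans (abs_nonneg _) (hMle 1 hone_mem)
  have h2M := full_bound ξ (p*4) M hM0
      (fun T' h1 h2 => hMle T' (Finset.mem_Icc.mpr ⟨h1, h2⟩))
      (quad_abs_le ξ hξsq _) T (by omega : T ≤ p*4)
  have hMlower : δ * η * Real.log (p:ℝ) / 2 ≤ M := by
    have := le_abs_self (∑ n ∈ Finset.Icc 1 T, ξ ((n:ℕ) : ZMod p) / (n:ℝ))
    linarith
  -- bound the character-sum sup via improved PV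
  have hq4 : p*4 > Q := by omega
  have hlogq0 : (0:ℝ) ≤ Real.log ((p*4:ℕ):ℝ) := by
    apply Real.log_nonneg
    have : (1:ℕ) ≤ p*4 := by omega
    exact_mod_cast this
  have hS2le : S2 ≤ ε' * Real.sqrt ((p*4:ℕ):ℝ) * Real.log ((p*4:ℕ):ℝ) := by
    rw [hS2def]
    apply ciSup_le
    intro N
    by_cases hmem : N ∈ Finset.Icc 1 (p*4)
    · rw [ciSup_pos hmem]
      exact hQ (p*4) hq4 (chiP p ξ) (chiP_primitive p hp (by omega) ξ hξprim)
        (chiP_sq p ξ hξsq) (chiP_even p ξ hξodd) N (Finset.mem_Icc.mp hmem).2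
    · haveI : IsEmpty (N ∈ Finset.Icc 1 (p*4)) := ⟨hmem⟩
      rw [Real.iSup_of_isEmpty]
      have := Real.sqrt_nonneg ((p*4:ℕ):ℝ)
      positivity
  have hS20 : 0 ≤ S2 := by
    rw [hS2def]
    have h1 := le_ciSup (f := fun N : ℕ => ⨆ _ : N ∈ Finset.Icc 1 (p*4), |∑ n ∈ Finset.Icc 1 N, (chiP p ξ) ((n:ℕ) : ZMod (p*4))|) ?_ 1
    · rw [ciSup_pos hone_mem] at h1
      exact le_trans (abs_nonneg _) h1
    · refine ⟨ε' * Real.sqrt ((p*4:ℕ):ℝ) * Real.log ((p*4:ℕ):ℝ), ?_⟩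
      rintro y ⟨N, rfl⟩
      dsimp only
      by_cases hmem : N ∈ Finset.Icc 1 (p*4)
      · rw [ciSup_pos hmem]
        exact hQ (p*4) hq4 (chiP p ξ) (chiP_primitive p hp (by omega) ξ hξprim)
          (chiP_sq p ξ hξsq) (chiP_even p ξ hξodd) N (Finset.mem_Icc.mp hmem).2
      · haveI : IsEmpty (N ∈ Finset.Icc 1 (p*4)) := ⟨hmem⟩
        rw [Real.iSup_of_isEmpty]
        have := Real.sqrt_nonneg ((p*4:ℕ):ℝ)
        positivity
  have hsqrtpos : 0 < Real.sqrt ((p*4:ℕ):ℝ) := by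
    apply Real.sqrt_pos.mpr
    have : (0:ℕ) < p*4 := by omega
    exact_mod_cast this
  have hLHS : (1 / Real.sqrt ((p*4:ℕ):ℝ)) * S2 ≤ ε' * Real.log ((p*4:ℕ):ℝ) := by
    have h1 : (1 / Real.sqrt ((p*4:ℕ):ℝ)) * S2
        ≤ (1 / Real.sqrt ((p*4:ℕ):ℝ)) * (ε' * Real.sqrt ((p*4:ℕ):ℝ) * Real.log ((p*4:ℕ):ℝ)) :=
      mul_le_mul_of_nonneg_left hS2le (by positivity)
    calc (1 / Real.sqrt ((p*4:ℕ):ℝ)) * S2 ≤ _ := h1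
      _ = ε' * Real.log ((p*4:ℕ):ℝ) := by field_simp
  have hcoef : Real.sqrt ((4:ℕ):ℝ) / (Real.pi * ((Nat.totient 4 : ℕ):ℝ)) = 1/Real.pi := by
    rw [show ((4:ℕ):ℝ) = (2:ℝ)^2 by norm_num, Real.sqrt_sq (by norm_num : (0:ℝ) ≤ 2),
      show Nat.totient 4 = 2 from rfl]
    push_cast
    rw [div_eq_div_iff (by positivity) (ne_of_gt hπ)]
    ring
  rw [hcoef, show ((p:ℝ) * ((4:ℕ):ℝ)) = ((p*4:ℕ):ℝ) by push_cast; ring] at h21'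
  -- final contradiction
  have hRHS : (1/Real.pi) * M - C ≤ ε' * Real.log ((p*4:ℕ):ℝ) := le_trans h21' hLHS
  have hlogq : Real.log ((p*4:ℕ):ℝ) ≤ 2 * Real.log (p:ℝ) := by
    have hp4R : (4:ℝ) < (p:ℝ) := by exact_mod_cast hp4
    have h1 : ((p*4:ℕ):ℝ) ≤ (p:ℝ)^2 := by push_cast; nlinarith
    calc Real.log ((p*4:ℕ):ℝ) ≤ Real.log ((p:ℝ)^2) := by
          apply Real.log_le_log (by positivity) h1
      _ = 2 * Real.log (p:ℝ) := by rw [Real.log_pow]; push_cast; ring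
  have hMπ : (1/Real.pi) * (δ * η * Real.log (p:ℝ) / 2) ≤ (1/Real.pi) * M :=
    mul_le_mul_of_nonneg_left hMlower (by positivity)
  have hεlog : ε' * Real.log ((p*4:ℕ):ℝ) ≤ (δ * η / (16*Real.pi)) * (2 * Real.log (p:ℝ)) := by
    rw [hε'_def]
    exact mul_le_mul_of_nonneg_left hlogq (by positivity)
  have hkey : (1/Real.pi) * (δ * η * Real.log (p:ℝ) / 2)
      - (δ * η / (16*Real.pi)) * (2 * Real.log (p:ℝ))
      = (3 * δ * η / (8 * Real.pi)) * Real.log (p:ℝ) := by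
    field_simp
    ring
  linarith
end

section
/- Let ξ be an odd primitive quadratic character mod a prime p, let δ > 0, ε > 0, and let ℓ ≡ 3 (mod 4) be a prime with ℓ > 2/δ. Suppose t ≤ p is a real number with t > p^ε and (1/log t) ∑_{n ≤ t} ξ(n)/n ≥ δ. Then for p sufficiently large (in terms of δ, ε, ℓ), ∑_{n ≤ t, ℓ ∤ n} ξ(n)/n ≥ (δε/4) log(pℓ). -/
open DirichletCharacter

lemma aux_harmonic_eq (M : ℕ) : ∑ m ∈ Finset.Icc 1 M, (1:ℝ)/m = (harmonic M : ℝ) := by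
  rw [harmonic]; push_cast
  rw [show Finset.Icc 1 M = Finset.Ico 1 (M+1) by rfl, Finset.sum_Ico_eq_sum_range]
  simp [one_div, add_comm]

lemma aux_filter_eq (ℓ N : ℕ) (hℓ : 0 < ℓ) :
    (Finset.Icc 1 N).filter (fun n => ℓ ∣ n) = (Finset.Icc 1 (N/ℓ)).image (fun m => ℓ * m) := by
  ext n
  simp only [Finset.mem_filter, Finset.mem_Icc, Finset.mem_image]
  constructor
  · rintro ⟨⟨h1, h2⟩, m, rfl⟩
    refine ⟨m, ⟨by nlinarith, Nat.le_div_iff_mul_le hℓ |>.2 (by rw [mul_comm]; omega)⟩, by ring⟩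
  · rintro ⟨m, ⟨h1, h2⟩, rfl⟩
    have := Nat.le_div_iff_mul_le hℓ |>.1 h2
    exact ⟨⟨by nlinarith, by rw [mul_comm]; omega⟩, m, rfl⟩

lemma aux_abs_le (p : ℕ) (ξ : DirichletCharacter ℝ p) (h : ξ^2 = 1) (x : ZMod p) :
    |ξ x| ≤ 1 := by
  by_cases hx : IsUnit x
  · have h2 : ξ x * ξ x = 1 := by
      have := congrFun (congrArg (fun χ : DirichletCharacter ℝ p => ⇑χ) h) x
      simpa [pow_two, MulChar.one_apply hx] using this
    rcases mul_self_eq_one_iff.1 h2 with h' | h' <;> simp [h']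
  · simp [ξ.map_nonunit hx]

set_option maxHeartbeats 1000000 in
/-- For an odd primitive quadratic `ξ mod p` (`p` prime), `δ, ε > 0`, a prime
`ℓ ≡ 3 (mod 4)` with `ℓ > 2/δ`, and `p^ε < t ≤ p` with `L_ξ(t) ≥ δ`: for `p` large in terms of
`δ, ε, ℓ`, one has `∑_{n ≤ t, ℓ ∤ n} ξ(n)/n ≥ (δε/4) log(pℓ)`. -/
theorem restricted_logSum_ge_log_q
    (δ ε : ℝ) (hδ : 0 < δ) (hε : 0 < ε)
    (ℓ : ℕ) (hℓ : ℓ.Prime) (hℓ3 : ℓ % 4 = 3) (hℓδ : (ℓ : ℝ) > 2 / δ) :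
    ∃ P : ℝ, ∀ p : ℕ, p.Prime → (p : ℝ) > P →
      ∀ ξ : DirichletCharacter ℝ p, ξ.IsPrimitive → ξ ^ 2 = 1 → ξ.Odd →
        ∀ t : ℝ, t ≤ (p : ℝ) → t > (p : ℝ) ^ ε →
          (1 / Real.log t) * ∑ n ∈ Finset.Icc 1 ⌊t⌋₊, ξ (n : ZMod p) / (n : ℝ) ≥ δ →
          (∑ n ∈ (Finset.Icc 1 ⌊t⌋₊).filter (fun n => ¬ ℓ ∣ n),
              ξ (n : ZMod p) / (n : ℝ)) ≥
            δ * ε / 4 * Real.log ((p : ℝ) * (ℓ : ℝ)) := by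
  have hℓ0 : (0:ℝ) < ℓ := by exact_mod_cast hℓ.pos
  have hℓ1 : (1:ℝ) < ℓ := by exact_mod_cast hℓ.one_lt
  have hℓinv : 1 / (ℓ:ℝ) < δ / 2 := by
    rw [div_lt_div_iff₀ hℓ0 (by norm_num)]
    rw [gt_iff_lt, div_lt_iff₀ hδ] at hℓδ
    nlinarith
  refine ⟨Real.exp (4 / (δ * ε) + Real.log ℓ), fun p hp hpP ξ _ hξ2 _ t htp htpe hlog => ?_⟩
  have hp0 : (0:ℝ) < p := by exact_mod_cast hp.pos
  have hlogp : Real.log p > 4 / (δ * ε) + Real.log ℓ :=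
    (Real.lt_log_iff_exp_lt hp0).2 hpP
  have hlogℓ : (0:ℝ) < Real.log ℓ := Real.log_pos hℓ1
  have hlogp0 : (0:ℝ) < Real.log p := by
    have : 0 < 4 / (δ * ε) := by positivity
    linarith
  have hp1 : (1:ℝ) < p := by
    have : (1:ℝ) < Real.exp (4 / (δ * ε) + Real.log ℓ) := by
      rw [show (1:ℝ) = Real.exp 0 by simp]
      exact Real.exp_lt_exp.2 (by positivity)
    linarith
  have ht1 : (1:ℝ) < t := by
    calc (1:ℝ) = (p:ℝ) ^ (0:ℝ) := by rw [Real.rpow_zero]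
    _ < (p:ℝ) ^ ε := (Real.rpow_lt_rpow_left_iff hp1).2 hε
    _ < t := htpe
  have hL : Real.log t > ε * Real.log p := by
    have := Real.log_lt_log (by positivity) htpe
    rwa [Real.log_rpow hp0] at this
  have hL0 : 0 < Real.log t := by nlinarith
  set N := ⌊t⌋₊ with hN
  have hNt : (N:ℝ) ≤ t := Nat.floor_le (by linarith)
  -- full sum lower bound
  have hF : ∑ n ∈ Finset.Icc 1 N, ξ (n : ZMod p) / (n : ℝ) ≥ δ * Real.log t := by
    have := mul_le_mul_of_nonneg_left hlog (le_of_lt hL0)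
    rw [← mul_assoc, mul_one_div, div_self (ne_of_gt hL0), one_mul] at this
    linarith
  -- bound the removed part
  have hsplit := Finset.sum_filter_add_sum_filter_not (Finset.Icc 1 N)
    (fun n => ℓ ∣ n) (fun n => ξ (n : ZMod p) / (n : ℝ))
  set D := ∑ n ∈ (Finset.Icc 1 N).filter (fun n => ℓ ∣ n), ξ (n : ZMod p) / (n : ℝ) with hD
  have hDb : |D| ≤ (1/ℓ) * (1 + Real.log t) := by
    have h1 : |D| ≤ ∑ n ∈ (Finset.Icc 1 N).filter (fun n => ℓ ∣ n), 1 / (n:ℝ) := by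
      refine (Finset.abs_sum_le_sum_abs _ _).trans (Finset.sum_le_sum fun n hn => ?_)
      have hn1 : 1 ≤ n := (Finset.mem_Icc.1 (Finset.mem_filter.1 hn).1).1
      have hn0 : (0:ℝ) < n := by exact_mod_cast hn1
      rw [abs_div, abs_of_pos hn0]
      gcongr
      exact aux_abs_le p ξ hξ2 _
    have h2 : ∑ n ∈ (Finset.Icc 1 N).filter (fun n => ℓ ∣ n), 1 / (n:ℝ)
        = (1/ℓ) * ∑ m ∈ Finset.Icc 1 (N/ℓ), 1/(m:ℝ) := by
      rw [aux_filter_eq ℓ N hℓ.pos, Finset.sum_image (by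
        intro a _ b _ hab
        exact Nat.eq_of_mul_eq_mul_left hℓ.pos hab), Finset.mul_sum]
      apply Finset.sum_congr rfl
      intro m hm
      have hm1 : 1 ≤ m := (Finset.mem_Icc.1 hm).1
      have : ((ℓ * m : ℕ) : ℝ) = (ℓ:ℝ) * m := by push_cast; ring
      rw [this]
      field_simp
    have h3 : ∑ m ∈ Finset.Icc 1 (N/ℓ), 1/(m:ℝ) ≤ 1 + Real.log t := by
      rw [aux_harmonic_eq]
      refine (harmonic_le_one_add_log _).trans ?_
      have hlogle : Real.log ((N/ℓ : ℕ):ℝ) ≤ Real.log t := by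
        rcases Nat.eq_zero_or_pos (N/ℓ) with h | h
        · rw [h]; simp; linarith
        · have h0 : (0:ℝ) < ((N/ℓ : ℕ):ℝ) := by exact_mod_cast h
          have hle : ((N/ℓ : ℕ):ℝ) ≤ t := by
            have : ((N/ℓ : ℕ):ℝ) ≤ (N:ℝ) := by exact_mod_cast Nat.div_le_self N ℓ
            linarith
          exact Real.log_le_log h0 hle
      linarith
    calc |D| ≤ (1/ℓ) * ∑ m ∈ Finset.Icc 1 (N/ℓ), 1/(m:ℝ) := by rw [← h2]; exact h1
    _ ≤ (1/ℓ) * (1 + Real.log t) := by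
        apply mul_le_mul_of_nonneg_left h3 (by positivity)
  -- combine
  have hR : ∑ n ∈ (Finset.Icc 1 N).filter (fun n => ¬ ℓ ∣ n), ξ (n : ZMod p) / (n : ℝ)
      ≥ δ * Real.log t - (1/ℓ) * (1 + Real.log t) := by
    have habs := abs_le.1 hDb
    linarith [hsplit, hF, habs.1, habs.2]
  have hlogmul : Real.log ((p:ℝ) * ℓ) = Real.log p + Real.log ℓ :=
    Real.log_mul (ne_of_gt hp0) (ne_of_gt hℓ0)
  rw [hlogmul]
  have key : δ * Real.log t - (1/ℓ) * (1 + Real.log t)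
      ≥ δ * ε / 4 * (Real.log p + Real.log ℓ) := by
    have h1 : (1/(ℓ:ℝ)) ≤ 1 := by rw [div_le_one hℓ0]; linarith
    have h2 : (δ - 1/ℓ) * Real.log t ≥ (δ/2) * (ε * Real.log p) := by
      apply mul_le_mul (by linarith) (le_of_lt hL) (by positivity) (by linarith)
    have h3 : δ * ε * Real.log p / 4 ≥ δ * ε / 4 * Real.log ℓ + 1 := by
      have h4 : δ * ε * (4 / (δ * ε)) = 4 := by field_simp
      have h5 : δ * ε * Real.log p > δ * ε * (4 / (δ * ε) + Real.log ℓ) := by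
        apply mul_lt_mul_of_pos_left hlogp (by positivity)
      nlinarith
    have expand : δ * Real.log t - (1/(ℓ:ℝ)) * (1 + Real.log t)
        = (δ - 1/(ℓ:ℝ)) * Real.log t - 1/(ℓ:ℝ) := by ring
    rw [expand]
    linarith [h2, h3, h1]
  linarith
end
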